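/- Let v ∈ ℤ^d be nonzero and let μ be a v-homogeneous probability measure that is stationary for the translation-invariant exclusion process. Define f and f_z on Γ = {⟨x,v⟩ : x ∈ ℤ^d} by f(⟨x,v⟩) = μ{η : η(x)=1} and, for z ∈ ℤ^d, f_z(⟨x,v⟩) = μ{η : η(x)=1 and η(x+z)=1} (these are well defined by v-homogeneity). Then for every s ∈ Γ: Σ_z p(z)·[f(s) − f_z(s)] = Σ_z p(z)·[f(s − ⟨z,v⟩) − f_z(s − ⟨z,v⟩)]. -/

import Mathlib

open MeasureTheory Filter Topology

namespace ExclusionPaper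

abbrev Zd (d : ℕ) := Fin d → ℤ

abbrev Conf (d : ℕ) := Zd d → Bool

noncomputable def ind (b : Bool) : ℝ := if b then 1 else 0

def swap {d : ℕ} (η : Conf d) (x y : Zd d) : Conf d :=
  fun z => if z = x then η y else if z = y then η x else η z

def IsCylinder {d : ℕ} (f : Conf d → ℝ) : Prop :=
  ∃ F : Finset (Zd d), ∀ η η' : Conf d, (∀ x ∈ F, η x = η' x) → f η = f η'

noncomputable def gen {d : ℕ} (p : Zd d → ℝ) (f : Conf d → ℝ) (η : Conf d) : ℝ :=
  ∑' x : Zd d, ∑' y : Zd d,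
    p (y - x) * ind (η x) * (1 - ind (η y)) * (f (swap η x y) - f η)

def IsStationary {d : ℕ} (p : Zd d → ℝ) (μ : Measure (Conf d)) : Prop :=
  ∀ f : Conf d → ℝ, IsCylinder f → ∫ η, gen p f η ∂μ = 0

def IsProductWith {d : ℕ} (α : Zd d → ℝ) (μ : Measure (Conf d)) : Prop :=
  IsProbabilityMeasure μ ∧
  ∀ F : Finset (Zd d), ∀ b : Zd d → Bool,
    μ {η : Conf d | ∀ x ∈ F, η x = b x} =
      ∏ x ∈ F, ENNReal.ofReal (if b x then α x else 1 - α x)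

noncomputable def pifun {d : ℕ} (α : Zd d → ℝ) (x : Zd d) : ℝ := α x / (1 - α x)

def innerZ {d : ℕ} (x y : Zd d) : ℤ := ∑ i, x i * y i

noncomputable def innerR {d : ℕ} (x : Zd d) (v : Fin d → ℝ) : ℝ := ∑ i, (x i : ℝ) * v i
def shift {d : ℕ} (x : Zd d) (η : Conf d) : Conf d := fun y => η (y + x)

def VHomog {d : ℕ} (v : Zd d) (μ : Measure (Conf d)) : Prop :=
  ∀ x : Zd d, innerZ x v = 0 → μ.map (shift x) = μ

def onesOn {d : ℕ} (A : Finset (Zd d)) (x : Zd d) : Set (Conf d) :=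
  {η : Conf d | ∀ a ∈ A, η (x + a) = true}

def VProfile {d : ℕ} (v : Zd d) (μ : Measure (Conf d)) : Prop :=
  VHomog v μ ∧
  ∀ A : Finset (Zd d), A.Nonempty →
    Tendsto (fun x : Zd d => (μ (onesOn A x)).toReal)
      (comap (fun x : Zd d => innerZ x v) atBot) (𝓝 (0 : ℝ)) ∧
    Tendsto (fun x : Zd d => (μ (onesOn A x)).toReal)
      (comap (fun x : Zd d => innerZ x v) atTop) (𝓝 (1 : ℝ))

noncomputable def conv {d : ℕ} (p q : Zd d → ℝ) : Zd d → ℝ :=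
  fun z => ∑' w : Zd d, p w * q (z - w)

noncomputable def convPow {d : ℕ} (p : Zd d → ℝ) : ℕ → Zd d → ℝ
  | 0 => fun z => if z = 0 then 1 else 0
  | n + 1 => conv p (convPow p n)

def Irred {d : ℕ} (p : Zd d → ℝ) : Prop :=
  ∀ z : Zd d, ∃ n : ℕ, 1 ≤ n ∧ 0 < convPow p n z

def FiniteMean {d : ℕ} (p : Zd d → ℝ) : Prop :=
  Summable (fun z : Zd d => ((∑ i, |z i| : ℤ) : ℝ) * p z)

noncomputable def driftInner {d : ℕ} (p : Zd d → ℝ) (v : Zd d) : ℝ :=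
  ∑ i, (∑' z : Zd d, ((z i : ℤ) : ℝ) * p z) * ((v i : ℤ) : ℝ)

def ExtremalStationary {d : ℕ} (p : Zd d → ℝ) (μ : Measure (Conf d)) : Prop :=
  IsProbabilityMeasure μ ∧ IsStationary p μ ∧
  ∀ t : ℝ, t ∈ Set.Ioo (0 : ℝ) 1 →
    ∀ μ₁ μ₂ : Measure (Conf d),
      IsProbabilityMeasure μ₁ → IsProbabilityMeasure μ₂ →
      IsStationary p μ₁ → IsStationary p μ₂ →
      μ = ENNReal.ofReal t • μ₁ + ENNReal.ofReal (1 - t) • μ₂ →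
      μ₁ = μ ∧ μ₂ = μ

def StochLE {d : ℕ} (μ₁ μ₂ : Measure (Conf d)) : Prop :=
  ∀ f : Conf d → ℝ, Continuous f → Monotone f → (∃ C : ℝ, ∀ η, |f η| ≤ C) →
    ∫ η, f η ∂μ₁ ≤ ∫ η, f η ∂μ₂
/-! ### Auxiliary lemmas -/

lemma ind_nonneg (b : Bool) : 0 ≤ ind b := by cases b <;> norm_num [ind]

lemma ind_le_one (b : Bool) : ind b ≤ 1 := by cases b <;> norm_num [ind]

lemma ind_mul_nonneg (a b : Bool) : 0 ≤ ind a * (1 - ind b) := by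
  cases a <;> cases b <;> norm_num [ind]

lemma ind_mul_le_one (a b : Bool) : ind a * (1 - ind b) ≤ 1 := by
  cases a <;> cases b <;> norm_num [ind]

lemma measurableSet_eval {d : ℕ} (w : Zd d) :
    MeasurableSet {η : Conf d | η w = true} := by
  have h : {η : Conf d | η w = true} = (fun η : Conf d => η w) ⁻¹' {true} := rfl
  rw [h]
  exact (measurable_pi_apply w) (measurableSet_singleton true)

lemma measurableSet_eval2 {d : ℕ} (w w' : Zd d) :
    MeasurableSet {η : Conf d | η w = true ∧ η w' = true} := by
  have h : {η : Conf d | η w = true ∧ η w' = true}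
      = {η : Conf d | η w = true} ∩ {η : Conf d | η w' = true} := rfl
  rw [h]
  exact (measurableSet_eval w).inter (measurableSet_eval w')

lemma ind_eq_indicator {d : ℕ} (w : Zd d) :
    (fun η : Conf d => ind (η w))
      = Set.indicator {η : Conf d | η w = true} (fun _ => (1:ℝ)) := by
  funext η
  by_cases h : η w = true <;> simp [Set.indicator, ind, h]

lemma ind2_eq_indicator {d : ℕ} (w w' : Zd d) :
    (fun η : Conf d => ind (η w) * ind (η w'))
      = Set.indicator {η : Conf d | η w = true ∧ η w' = true} (fun _ => (1:ℝ)) := by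
  funext η
  by_cases h : η w = true <;> by_cases h' : η w' = true <;>
    simp [Set.indicator, ind, h, h']

lemma integral_ind {d : ℕ} (μ : Measure (Conf d)) [IsProbabilityMeasure μ] (w : Zd d) :
    ∫ η, ind (η w) ∂μ = (μ {η : Conf d | η w = true}).toReal := by
  rw [ind_eq_indicator w, integral_indicator_const (1:ℝ) (measurableSet_eval w)]
  simp [measureReal_def]

lemma integral_ind2 {d : ℕ} (μ : Measure (Conf d)) [IsProbabilityMeasure μ] (w w' : Zd d) :
    ∫ η, ind (η w) * ind (η w') ∂μ
      = (μ {η : Conf d | η w = true ∧ η w' = true}).toReal := by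
  rw [ind2_eq_indicator w w', integral_indicator_const (1:ℝ) (measurableSet_eval2 w w')]
  simp [measureReal_def]

lemma integrable_ind {d : ℕ} (μ : Measure (Conf d)) [IsProbabilityMeasure μ] (w : Zd d) :
    Integrable (fun η : Conf d => ind (η w)) μ := by
  rw [ind_eq_indicator w]
  exact (integrable_const (1:ℝ)).indicator (measurableSet_eval w)

lemma integrable_ind2 {d : ℕ} (μ : Measure (Conf d)) [IsProbabilityMeasure μ] (w w' : Zd d) :
    Integrable (fun η : Conf d => ind (η w) * ind (η w')) μ := by
  rw [ind2_eq_indicator w w']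
  exact (integrable_const (1:ℝ)).indicator (measurableSet_eval2 w w')

lemma meas_toReal_nonneg {d : ℕ} (μ : Measure (Conf d)) (S : Set (Conf d)) :
    0 ≤ (μ S).toReal := ENNReal.toReal_nonneg

lemma meas_toReal_le_one {d : ℕ} (μ : Measure (Conf d)) [IsProbabilityMeasure μ]
    (S : Set (Conf d)) : (μ S).toReal ≤ 1 := by
  have h : μ S ≤ 1 := prob_le_one
  simpa using ENNReal.toReal_mono (by simp) h

theorem vhomog_stationary_identity {d : ℕ} (p : Zd d → ℝ)
    (hp0 : ∀ z, 0 ≤ p z) (hp1 : ∑' z : Zd d, p z = 1)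
    (v : Zd d) (hv : v ≠ 0)
    (μ : Measure (Conf d)) (hprob : IsProbabilityMeasure μ)
    (hstat : IsStationary p μ) (hhom : VHomog v μ)
    (F : ℤ → ℝ) (Fz : Zd d → ℤ → ℝ)
    (hF : ∀ x : Zd d, F (innerZ x v) = (μ {η : Conf d | η x = true}).toReal)
    (hFz : ∀ (z x : Zd d),
      Fz z (innerZ x v) = (μ {η : Conf d | η x = true ∧ η (x + z) = true}).toReal) :
    ∀ s : ℤ, (∃ x : Zd d, innerZ x v = s) →
      ∑' z : Zd d, p z * (F s - Fz z s) =
        ∑' z : Zd d, p z * (F (s - innerZ z v) - Fz z (s - innerZ z v)) := by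
  rintro s ⟨x, hx⟩
  haveI := hprob
  have hps : Summable p := by
    by_contra hc
    rw [tsum_eq_zero_of_not_summable hc] at hp1
    norm_num at hp1
  -- linearity of innerZ
  have hlin : ∀ z : Zd d, innerZ (x - z) v = s - innerZ z v := by
    intro z
    rw [← hx]
    unfold innerZ
    rw [← Finset.sum_sub_distrib]
    refine Finset.sum_congr rfl fun i _ => ?_
    simp [sub_mul]
  -- the cylinder function g
  set g : Conf d → ℝ := fun η => ind (η x) with hg
  have hcyl : IsCylinder g := by
    refine ⟨{x}, fun η η' hmem => ?_⟩
    simp only [g]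
    rw [hmem x (Finset.mem_singleton_self x)]
  have h0 : ∫ η, gen p g η ∂μ = 0 := hstat g hcyl
  -- pointwise computation of the generator
  have hgen : ∀ η : Conf d, gen p g η =
      ∑' z : Zd d, p z * (ind (η (x - z)) * (1 - ind (η x))
        - ind (η x) * (1 - ind (η (x + z)))) := by
    intro η
    have hsub : Summable fun a : Zd d => p (x - a) :=
      (Equiv.subLeft x).summable_iff.mpr hps
    have hrow : ∀ a : Zd d,
        (∑' b : Zd d, p (b - a) * ind (η a) * (1 - ind (η b)) * (g (swap η a b) - g η))
        = (if a = x then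
            (∑' b : Zd d, -(p (b - x) * (ind (η x) * (1 - ind (η b))))) else 0)
          + p (x - a) * (ind (η a) * (1 - ind (η x))) := by
      intro a
      by_cases ha : a = x
      · subst ha
        rw [if_pos rfl]
        have hterm : ∀ b : Zd d,
            p (b - a) * ind (η a) * (1 - ind (η b)) * (g (swap η a b) - g η)
            = -(p (b - a) * (ind (η a) * (1 - ind (η b)))) := by
          intro b
          have hsw : swap η a b a = η b := by simp [swap]
          simp only [g, hsw]
          cases η a <;> cases η b <;> norm_num [ind]
        rw [tsum_congr hterm]
        have hz : ind (η a) * (1 - ind (η a)) = 0 := by cases η a <;> norm_num [ind]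
        rw [hz, mul_zero, add_zero]
      · rw [if_neg ha, zero_add]
        rw [tsum_eq_single x ?_]
        · have hsw : swap η a x x = η a := by simp [swap, Ne.symm ha]
          simp only [g, hsw]
          cases η a <;> cases η x <;> norm_num [ind]
        · intro b hb
          have hsw : swap η a b x = η x := by simp [swap, Ne.symm ha, Ne.symm hb]
          simp only [g, hsw, sub_self, mul_zero]
    have step1 : gen p g η
        = ∑' a : Zd d, ((if a = x then
            (∑' b : Zd d, -(p (b - x) * (ind (η x) * (1 - ind (η b))))) else 0)
          + p (x - a) * (ind (η a) * (1 - ind (η x)))) := by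
      unfold gen
      exact tsum_congr hrow
    rw [step1]
    have hC : Summable (fun a : Zd d => if a = x then
        (∑' b : Zd d, -(p (b - x) * (ind (η x) * (1 - ind (η b))))) else 0) :=
      summable_of_ne_finset_zero (s := {x}) (by
        intro a ha
        rw [if_neg (by simpa using ha)])
    have hD : Summable (fun a : Zd d => p (x - a) * (ind (η a) * (1 - ind (η x)))) :=
      Summable.of_nonneg_of_le
        (fun a => mul_nonneg (hp0 _) (ind_mul_nonneg _ _))
        (fun a => mul_le_of_le_one_right (hp0 _) (ind_mul_le_one _ _)) hsub
    rw [Summable.tsum_add hC hD, tsum_ite_eq]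
    have h1 : (∑' b : Zd d, -(p (b - x) * (ind (η x) * (1 - ind (η b)))))
        = ∑' z : Zd d, -(p z * (ind (η x) * (1 - ind (η (x + z))))) := by
      rw [← Equiv.tsum_eq (Equiv.addLeft x)
        (fun b => -(p (b - x) * (ind (η x) * (1 - ind (η b)))))]
      refine tsum_congr fun z => ?_
      simp [Equiv.addLeft]
    have h2 : (∑' a : Zd d, p (x - a) * (ind (η a) * (1 - ind (η x))))
        = ∑' z : Zd d, p z * (ind (η (x - z)) * (1 - ind (η x))) := by
      rw [← Equiv.tsum_eq (Equiv.subLeft x)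
        (fun a => p (x - a) * (ind (η a) * (1 - ind (η x))))]
      refine tsum_congr fun z => ?_
      simp [Equiv.subLeft]
    rw [h1, h2]
    have hS1 : Summable (fun z : Zd d => -(p z * (ind (η x) * (1 - ind (η (x + z)))))) :=
      Summable.neg (Summable.of_nonneg_of_le
        (fun z => mul_nonneg (hp0 _) (ind_mul_nonneg _ _))
        (fun z => mul_le_of_le_one_right (hp0 _) (ind_mul_le_one _ _)) hps)
    have hS2 : Summable (fun z : Zd d => p z * (ind (η (x - z)) * (1 - ind (η x)))) :=
      Summable.of_nonneg_of_le
        (fun z => mul_nonneg (hp0 _) (ind_mul_nonneg _ _))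
        (fun z => mul_le_of_le_one_right (hp0 _) (ind_mul_le_one _ _)) hps
    rw [← Summable.tsum_add hS1 hS2]
    exact tsum_congr fun z => by ring
  -- integrability of the summands
  have hint_h : ∀ z : Zd d, Integrable (fun η : Conf d =>
      ind (η (x - z)) * (1 - ind (η x)) - ind (η x) * (1 - ind (η (x + z)))) μ := by
    intro z
    have e : (fun η : Conf d =>
        ind (η (x - z)) * (1 - ind (η x)) - ind (η x) * (1 - ind (η (x + z))))
        = fun η => (ind (η (x - z)) - ind (η (x - z)) * ind (η x))
          - (ind (η x) - ind (η x) * ind (η (x + z))) := by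
      funext η; ring
    rw [e]
    exact ((integrable_ind μ _).sub (integrable_ind2 μ _ _)).sub
      ((integrable_ind μ _).sub (integrable_ind2 μ _ _))
  have hmeasz : ∀ z : Zd d, AEStronglyMeasurable (fun η : Conf d =>
      p z * (ind (η (x - z)) * (1 - ind (η x)) - ind (η x) * (1 - ind (η (x + z))))) μ :=
    fun z => ((hint_h z).const_mul (p z)).aestronglyMeasurable
  -- uniform bound
  have habs : ∀ (z : Zd d) (η : Conf d),
      |p z * (ind (η (x - z)) * (1 - ind (η x)) - ind (η x) * (1 - ind (η (x + z))))|
        ≤ p z := by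
    intro z η
    rw [abs_mul, abs_of_nonneg (hp0 z)]
    refine mul_le_of_le_one_right (hp0 z) ?_
    rw [abs_le]
    constructor
    · nlinarith [ind_mul_nonneg (η (x - z)) (η x), ind_mul_le_one (η x) (η (x + z))]
    · nlinarith [ind_mul_le_one (η (x - z)) (η x), ind_mul_nonneg (η x) (η (x + z))]
  have hfin : (∑' z : Zd d, ∫⁻ η, ‖p z * (ind (η (x - z)) * (1 - ind (η x))
      - ind (η x) * (1 - ind (η (x + z))))‖₊ ∂μ) ≠ ⊤ := by
    have hlint : ∀ z : Zd d, (∫⁻ η, ‖p z * (ind (η (x - z)) * (1 - ind (η x))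
        - ind (η x) * (1 - ind (η (x + z))))‖₊ ∂μ) ≤ ENNReal.ofReal (p z) := by
      intro z
      calc (∫⁻ η, ‖p z * (ind (η (x - z)) * (1 - ind (η x))
            - ind (η x) * (1 - ind (η (x + z))))‖₊ ∂μ)
          ≤ ∫⁻ _, ENNReal.ofReal (p z) ∂μ := by
            refine lintegral_mono fun η => ?_
            rw [← enorm_eq_nnnorm, ← ofReal_norm, Real.norm_eq_abs]
            exact ENNReal.ofReal_le_ofReal (habs z η)
        _ = ENNReal.ofReal (p z) := by simp
    refine ne_top_of_le_ne_top ?_ (ENNReal.tsum_le_tsum hlint)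
    rw [← ENNReal.ofReal_tsum_of_nonneg hp0 hps, hp1]
    exact ENNReal.ofReal_ne_top
  -- the key identity from stationarity
  have key : (0:ℝ) = ∑' z : Zd d,
      p z * ((F (s - innerZ z v) - Fz z (s - innerZ z v)) - (F s - Fz z s)) := by
    rw [← h0, integral_congr_ae (Filter.Eventually.of_forall hgen),
      integral_tsum hmeasz hfin]
    refine tsum_congr fun z => ?_
    rw [integral_const_mul]
    congr 1
    have e : (fun η : Conf d =>
        ind (η (x - z)) * (1 - ind (η x)) - ind (η x) * (1 - ind (η (x + z))))
        = fun η => (ind (η (x - z)) - ind (η (x - z)) * ind (η x))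
          - (ind (η x) - ind (η x) * ind (η (x + z))) := by
      funext η; ring
    have i1 : Integrable (fun η : Conf d => ind (η (x - z)) - ind (η (x - z)) * ind (η x)) μ :=
      (integrable_ind μ _).sub (integrable_ind2 μ _ _)
    have i2 : Integrable (fun η : Conf d => ind (η x) - ind (η x) * ind (η (x + z))) μ :=
      (integrable_ind μ _).sub (integrable_ind2 μ _ _)
    rw [e, integral_sub i1 i2,
      integral_sub (integrable_ind μ _) (integrable_ind2 μ _ _),
      integral_sub (integrable_ind μ _) (integrable_ind2 μ _ _),
      integral_ind, integral_ind, integral_ind2, integral_ind2]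
    rw [← hlin z, ← hx, hF (x - z), hF x, hFz z (x - z), hFz z x]
    have hxz : x - z + z = x := sub_add_cancel x z
    rw [hxz]
  -- summability of both series
  have hbd : ∀ (A B : Set (Conf d)), |(μ A).toReal - (μ B).toReal| ≤ 1 := by
    intro A B
    rw [abs_le]
    constructor
    · have := meas_toReal_nonneg μ A; have := meas_toReal_le_one μ B; linarith
    · have := meas_toReal_le_one μ A; have := meas_toReal_nonneg μ B; linarith
  have hsum1 : Summable (fun z : Zd d => p z * (F s - Fz z s)) := by
    rw [← summable_abs_iff]
    refine Summable.of_nonneg_of_le (fun z => abs_nonneg _) (fun z => ?_) hps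
    rw [abs_mul, abs_of_nonneg (hp0 z)]
    refine mul_le_of_le_one_right (hp0 z) ?_
    rw [← hx, hF x, hFz z x]
    exact hbd _ _
  have hsum2 : Summable (fun z : Zd d =>
      p z * (F (s - innerZ z v) - Fz z (s - innerZ z v))) := by
    rw [← summable_abs_iff]
    refine Summable.of_nonneg_of_le (fun z => abs_nonneg _) (fun z => ?_) hps
    rw [abs_mul, abs_of_nonneg (hp0 z)]
    refine mul_le_of_le_one_right (hp0 z) ?_
    rw [← hlin z, hF (x - z), hFz z (x - z)]
    exact hbd _ _
  have key2 : (0:ℝ) = (∑' z : Zd d, p z * (F (s - innerZ z v) - Fz z (s - innerZ z v)))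
      - (∑' z : Zd d, p z * (F s - Fz z s)) := by
    rw [key, ← Summable.tsum_sub hsum2 hsum1]
    exact tsum_congr fun z => by ring
  linarith

end ExclusionPaper
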